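/- arXiv:1601.01968 — 4 statements merged into one kernel-verified Lean document; each statement's English description precedes it below -/
import Mathlib

section
/- Let P, Q be finite sets with |P| = |Q| = n ≥ 2, let 1 ≤ r ≤ n − 1, and let φ be a bijection from the r-element subsets of P to the r-element subsets of Q such that |φ(A₁) ∩ ⋯ ∩ φ(A_k)| = |A₁ ∩ ⋯ ∩ A_k| for every nonempty finite family of r-element subsets A₁, …, A_k of P. Then for each p ∈ P, the complement in Q of the union ⋃{φ(A) : A an r-subset of P with p ∉ A} is a singleton. -/
open Finset

lemma aux_inf'_fin {γ δ : Type*} [SemilatticeInf γ] (t : Finset δ) (ht : t.Nonempty)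
    (f : δ → γ) :
    haveI : Nonempty (Fin t.card) := ⟨⟨0, ht.card_pos⟩⟩
    (Finset.univ.inf' Finset.univ_nonempty fun i : Fin t.card => f (t.equivFin.symm i).1)
      = t.inf' ht f := by
  apply le_antisymm
  · apply Finset.le_inf'
    intro b hb
    have : f b = f (t.equivFin.symm (t.equivFin ⟨b, hb⟩)).1 := by simp
    rw [this]
    exact Finset.inf'_le _ (Finset.mem_univ _)
  · apply Finset.le_inf'
    intro i _
    exact Finset.inf'_le _ (t.equivFin.symm i).2

lemma aux_inf'_inter {ι α : Type*} [SemilatticeInf α] (c : α) (A : ι → α)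
    (t : Finset ι) (ht : t.Nonempty) :
    t.inf' ht (fun i => c ⊓ A i) = c ⊓ t.inf' ht A := by
  induction ht using Finset.Nonempty.cons_induction with
  | singleton i => simp
  | cons i t hit htne ih =>
      rw [Finset.inf'_cons htne, Finset.inf'_cons htne, ih]
      show (c ⊓ A i) ⊓ (c ⊓ t.inf' htne A) = c ⊓ (A i ⊓ t.inf' htne A)
      exact (inf_inf_distrib_left _ _ _).symm

lemma aux_card_sup {ι α β : Type*} [DecidableEq α] [DecidableEq β]
    (A : ι → Finset α) (B : ι → Finset β) (s : Finset ι)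
    (h : ∀ t ⊆ s, ∀ ht : t.Nonempty, (t.inf' ht A).card = (t.inf' ht B).card) :
    (s.sup A).card = (s.sup B).card := by
  induction s using Finset.cons_induction generalizing A B with
  | empty => simp
  | cons a t hat ih =>
      have ht : ∀ u ⊆ t, ∀ hu : u.Nonempty, (u.inf' hu A).card = (u.inf' hu B).card :=
        fun u hu hune => h u (hu.trans (Finset.subset_cons _)) hune
      have hUt : (t.sup A).card = (t.sup B).card := ih A B ht
      have hAa : (A a).card = (B a).card := by
        simpa using h {a} (by simp) (Finset.singleton_nonempty a)
      have hinter : (A a ∩ t.sup A).card = (B a ∩ t.sup B).card := by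
        show (A a ⊓ t.sup A).card = (B a ⊓ t.sup B).card
        rw [Finset.sup_inf_distrib_left t A (A a), Finset.sup_inf_distrib_left t B (B a)]
        apply ih
        intro u hu hune
        rw [aux_inf'_inter, aux_inf'_inter]
        have hau : a ∉ u := fun hh => hat (hu hh)
        have hins : (Finset.cons a u hau).Nonempty := Finset.cons_nonempty _
        have e1 : A a ⊓ u.inf' hune A = (Finset.cons a u hau).inf' hins A := by
          rw [Finset.inf'_cons]
        have e2 : B a ⊓ u.inf' hune B = (Finset.cons a u hau).inf' hins B := by
          rw [Finset.inf'_cons]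
        rw [e1, e2]
        apply h
        intro x hx
        rcases Finset.mem_cons.1 hx with rfl | hx
        · exact Finset.mem_cons_self _ _
        · exact Finset.subset_cons _ (hu hx)
      have k1 := Finset.card_union_add_card_inter (A a) (t.sup A)
      have k2 := Finset.card_union_add_card_inter (B a) (t.sup B)
      rw [Finset.sup_cons, Finset.sup_cons]
      show (A a ∪ t.sup A).card = (B a ∪ t.sup B).card
      omega

theorem stmt_4 {α β : Type*} [DecidableEq α] [DecidableEq β]
    (P : Finset α) (Q : Finset β) (n r : ℕ)
    (hP : P.card = n) (hQ : Q.card = n) (hn : 2 ≤ n) (hr1 : 1 ≤ r) (hrn : r ≤ n - 1)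
    (φ : Finset α → Finset β)
    (hbij : Set.BijOn φ {A : Finset α | A ⊆ P ∧ A.card = r}
      {B : Finset β | B ⊆ Q ∧ B.card = r})
    (hint : ∀ (ι : Type) [Fintype ι] [Nonempty ι] (A : ι → Finset α),
      (∀ i, A i ⊆ P ∧ (A i).card = r) →
      (Finset.univ.inf' Finset.univ_nonempty fun i => φ (A i)).card =
        (Finset.univ.inf' Finset.univ_nonempty fun i => A i).card) :
    ∀ p ∈ P,
      (Q \ (P.powerset.filter (fun A => A.card = r ∧ p ∉ A)).sup φ).card = 1 := by
  intro p hp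
  set S := P.powerset.filter (fun A => A.card = r ∧ p ∉ A) with hS
  have hmemS : ∀ A ∈ S, A ⊆ P ∧ A.card = r ∧ p ∉ A := by
    intro A hA
    simp only [hS, Finset.mem_filter, Finset.mem_powerset] at hA
    tauto
  have hsupid : S.sup id = P.erase p := by
    apply Finset.Subset.antisymm
    · intro x hx
      obtain ⟨A, hA, hxA⟩ := Finset.mem_sup.1 hx
      obtain ⟨hAP, _, hpA⟩ := hmemS A hA
      exact Finset.mem_erase.2 ⟨fun hxp => hpA (hxp ▸ hxA), hAP hxA⟩
    · intro x hx
      obtain ⟨hxp, hxP⟩ := Finset.mem_erase.1 hx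
      have hce : (P.erase p).card = n - 1 := by rw [Finset.card_erase_of_mem hp, hP]
      obtain ⟨u, hxu, huE, hucard⟩ :=
        Finset.exists_subsuperset_card_eq (t := P.erase p) (n := r)
          (Finset.singleton_subset_iff.2 hx) (by simpa using hr1) (by omega)
      have huS : u ∈ S := by
        simp only [hS, Finset.mem_filter, Finset.mem_powerset]
        refine ⟨huE.trans (Finset.erase_subset _ _), hucard, fun hpu => ?_⟩
        exact (Finset.mem_erase.1 (huE hpu)).1 rfl
      exact Finset.mem_sup.2 ⟨u, huS, hxu (Finset.mem_singleton_self x)⟩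
  have hcards : (S.sup id).card = (S.sup φ).card := by
    apply aux_card_sup
    intro t hts htne
    haveI : Nonempty (Fin t.card) := ⟨⟨0, htne.card_pos⟩⟩
    have hA : ∀ i : Fin t.card, ((t.equivFin.symm i).1 : Finset α) ⊆ P
        ∧ ((t.equivFin.symm i).1).card = r := by
      intro i
      obtain ⟨h1, h2, _⟩ := hmemS _ (hts (t.equivFin.symm i).2)
      exact ⟨h1, h2⟩
    have key := hint (Fin t.card) (fun i => (t.equivFin.symm i).1) hA
    have e1 := aux_inf'_fin t htne φ
    have e2 := aux_inf'_fin t htne id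
    simp only [id] at e2
    rw [e1, e2] at key
    exact key.symm
  have hsub : S.sup φ ⊆ Q := by
    intro x hx
    obtain ⟨A, hA, hxA⟩ := Finset.mem_sup.1 hx
    obtain ⟨h1, h2, _⟩ := hmemS A hA
    exact (hbij.mapsTo ⟨h1, h2⟩).1 hxA
  have hcard : (S.sup φ).card = n - 1 := by
    rw [← hcards, hsupid, Finset.card_erase_of_mem hp, hP]
  rw [Finset.card_sdiff_of_subset hsub, hQ, hcard]
  omega
end

section
/- Let P, Q be finite sets with |P| = |Q| = n ≥ 2, let 1 ≤ r ≤ n − 1, and let φ be a bijection from the r-element subsets of P to the r-element subsets of Q preserving all intersection cardinalities (|⋂ φ(A_i)| = |⋂ A_i| for every nonempty finite family of r-subsets). Then there exists a bijection π : P → Q such that φ(A) = π(A) (the image of A under π) for every r-element subset A of P. -/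
theorem stmt_5 {α β : Type*} [DecidableEq α] [DecidableEq β]
    (P : Finset α) (Q : Finset β) (n r : ℕ)
    (hP : P.card = n) (hQ : Q.card = n) (hn : 2 ≤ n) (hr1 : 1 ≤ r) (hrn : r ≤ n - 1)
    (φ : Finset α → Finset β)
    (hbij : Set.BijOn φ {A : Finset α | A ⊆ P ∧ A.card = r}
      {B : Finset β | B ⊆ Q ∧ B.card = r})
    (hint : ∀ (ι : Type) [Fintype ι] [Nonempty ι] (A : ι → Finset α),
      (∀ i, A i ⊆ P ∧ (A i).card = r) →
      (Finset.univ.inf' Finset.univ_nonempty fun i => φ (A i)).card =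
        (Finset.univ.inf' Finset.univ_nonempty fun i => A i).card) :
    ∃ π : α → β, Set.BijOn π ↑P ↑Q ∧
      ∀ A : Finset α, A ⊆ P → A.card = r → φ A = A.image π := by
  classical
  have hrn' : r ≤ n := le_trans hrn (Nat.sub_le n 1)
  -- Restated intersection hypothesis over nonempty finsets of r-subsets
  have key : ∀ (T : Finset (Finset α)) (hT : T.Nonempty),
      (∀ A ∈ T, A ⊆ P ∧ A.card = r) →
      (T.inf' hT (fun A => φ A)).card = (T.inf' hT id).card := by
    intro T hT hTsub
    haveI : Nonempty {A // A ∈ T} := ⟨⟨hT.choose, hT.choose_spec⟩⟩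
    set m := Fintype.card {A // A ∈ T} with hm
    haveI : Nonempty (Fin m) := Fin.pos_iff_nonempty.mp (by
      rw [hm]; exact Fintype.card_pos)
    let e : {A // A ∈ T} ≃ Fin m := Fintype.equivFin _
    let A : Fin m → Finset α := fun i => (e.symm i : Finset α)
    have hA : ∀ i, A i ⊆ P ∧ (A i).card = r := fun i => hTsub _ (e.symm i).2
    have h1 : (Finset.univ.inf' Finset.univ_nonempty fun i => φ (A i))
        = T.inf' hT (fun A => φ A) := by
      ext x
      simp only [Finset.mem_inf', Finset.mem_univ, true_imp_iff]
      constructor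
      · intro h B hB
        have := h (e ⟨B, hB⟩)
        simpa [A] using this
      · intro h i
        exact h _ (e.symm i).2
    have h2 : (Finset.univ.inf' Finset.univ_nonempty fun i => A i)
        = T.inf' hT id := by
      ext x
      simp only [Finset.mem_inf', Finset.mem_univ, true_imp_iff, id]
      constructor
      · intro h B hB
        have := h (e ⟨B, hB⟩)
        simpa [A] using this
      · intro h i
        exact h _ (e.symm i).2
    have := hint (Fin m) A hA
    rw [h1, h2] at this
    exact this
  -- The family of r-subsets of P containing p
  set S : α → Finset (Finset α) :=
    fun p => (P.powersetCard r).filter (fun A => p ∈ A) with hS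
  have hSmem : ∀ p A, A ∈ S p ↔ (A ⊆ P ∧ A.card = r) ∧ p ∈ A := by
    intro p A
    simp [hS, Finset.mem_powersetCard, and_assoc]
  have hSne : ∀ p ∈ P, (S p).Nonempty := by
    intro p hp
    obtain ⟨A, h1, h2, h3⟩ := Finset.exists_subsuperset_card_eq
      (Finset.singleton_subset_iff.mpr hp) (by simpa using hr1) (by omega)
    exact ⟨A, (hSmem p A).mpr ⟨⟨h2, h3⟩, h1 (Finset.mem_singleton_self p)⟩⟩
  -- the intersection of all r-subsets containing p is {p}
  have hinfS : ∀ p (hp : p ∈ P), (S p).inf' (hSne p hp) id = {p} := by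
    intro p hp
    apply Finset.eq_singleton_iff_unique_mem.mpr
    constructor
    · rw [Finset.mem_inf']
      intro A hA
      exact ((hSmem p A).mp hA).2
    · intro q hq
      by_contra hne
      rw [Finset.mem_inf'] at hq
      -- q ∈ P
      obtain ⟨A₀, hA₀⟩ := hSne p hp
      have hqP : q ∈ P := ((hSmem p A₀).mp hA₀).1.1 (hq A₀ hA₀)
      -- find an r-subset of P.erase q containing p
      have hpe : p ∈ P.erase q := Finset.mem_erase.mpr ⟨fun h => hne h.symm, hp⟩
      obtain ⟨A, h1, h2, h3⟩ := Finset.exists_subsuperset_card_eq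
        (Finset.singleton_subset_iff.mpr hpe) (by simpa using hr1)
        (by rw [Finset.card_erase_of_mem hqP, hP]; exact hrn)
      have hAS : A ∈ S p := (hSmem p A).mpr
        ⟨⟨h2.trans (Finset.erase_subset _ _), h3⟩, h1 (Finset.mem_singleton_self p)⟩
      exact (Finset.mem_erase.mp (h2 (hq A hAS))).1 rfl
  -- the intersection of the φ-images is a singleton
  have hcard1 : ∀ p (hp : p ∈ P), ((S p).inf' (hSne p hp) (fun A => φ A)).card = 1 := by
    intro p hp
    rw [key (S p) (hSne p hp) (fun A hA => ((hSmem p A).mp hA).1), hinfS p hp]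
    simp
  have hQne : Q.Nonempty := Finset.card_pos.mp (by omega)
  -- define π
  set π : α → β := fun p =>
    if hp : p ∈ P then (Finset.card_eq_one.mp (hcard1 p hp)).choose
    else hQne.choose with hπ
  have hπmem : ∀ p (hp : p ∈ P), ∀ A ∈ S p, π p ∈ φ A := by
    intro p hp A hA
    have : π p ∈ (S p).inf' (hSne p hp) (fun A => φ A) := by
      rw [hπ]; simp only [dif_pos hp]
      have hspec := (Finset.card_eq_one.mp (hcard1 p hp)).choose_spec
      have hm := Finset.mem_singleton_self (Finset.card_eq_one.mp (hcard1 p hp)).choose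
      rwa [← hspec] at hm
    rw [Finset.mem_inf'] at this
    exact this A hA
  have hπmem' : ∀ p ∈ P, ∀ A, A ⊆ P → A.card = r → p ∈ A → π p ∈ φ A := by
    intro p hp A h1 h2 h3
    exact hπmem p hp A ((hSmem p A).mpr ⟨⟨h1, h2⟩, h3⟩)
  -- π maps P into Q
  have hmaps : ∀ p ∈ P, π p ∈ Q := by
    intro p hp
    obtain ⟨A, hA⟩ := hSne p hp
    have hAP := (hSmem p A).mp hA
    have := hbij.mapsTo (show A ∈ {A : Finset α | A ⊆ P ∧ A.card = r} from hAP.1)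
    exact this.1 (hπmem p hp A hA)
  -- injectivity on P
  have hinj : ∀ p ∈ P, ∀ p' ∈ P, π p = π p' → p = p' := by
    intro p hp p' hp' heq
    by_contra hne
    set T := S p ∪ S p' with hT
    have hTne : T.Nonempty := ((hSne p hp).mono Finset.subset_union_left)
    have hTsub : ∀ A ∈ T, A ⊆ P ∧ A.card = r := by
      intro A hA
      rcases Finset.mem_union.mp hA with h | h
      · exact ((hSmem p A).mp h).1
      · exact ((hSmem p' A).mp h).1
    have hkey := key T hTne hTsub
    -- the intersection over T of the original sets is empty
    have hempty : T.inf' hTne id = ∅ := by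
      rw [Finset.eq_empty_iff_forall_notMem]
      intro x hx
      rw [Finset.mem_inf'] at hx
      have hxp : x ∈ ({p} : Finset α) := by
        rw [← hinfS p hp, Finset.mem_inf']
        exact fun A hA => hx A (Finset.mem_union_left _ hA)
      have hxp' : x ∈ ({p'} : Finset α) := by
        rw [← hinfS p' hp', Finset.mem_inf']
        exact fun A hA => hx A (Finset.mem_union_right _ hA)
      rw [Finset.mem_singleton] at hxp hxp'
      exact hne (hxp ▸ hxp' ▸ rfl)
    rw [hempty] at hkey
    simp only [Finset.card_empty] at hkey
    have : π p ∈ T.inf' hTne (fun A => φ A) := by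
      rw [Finset.mem_inf']
      intro A hA
      rcases Finset.mem_union.mp hA with h | h
      · exact hπmem p hp A h
      · exact heq ▸ hπmem p' hp' A h
    have := Finset.card_pos.mpr ⟨π p, this⟩
    omega
  -- the image formula
  have himg : ∀ A : Finset α, A ⊆ P → A.card = r → φ A = A.image π := by
    intro A hAP hAr
    have hsub : A.image π ⊆ φ A := by
      intro y hy
      obtain ⟨p, hpA, rfl⟩ := Finset.mem_image.mp hy
      exact hπmem' p (hAP hpA) A hAP hAr hpA
    have hcard : (A.image π).card = A.card :=
      Finset.card_image_of_injOn (fun x hx y hy => hinj x (hAP hx) y (hAP hy))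
    have hφcard : (φ A).card = r :=
      (hbij.mapsTo (show A ∈ {A : Finset α | A ⊆ P ∧ A.card = r} from ⟨hAP, hAr⟩)).2
    exact (Finset.eq_of_subset_of_card_le hsub (by rw [hcard, hAr, hφcard])).symm
  refine ⟨π, ⟨fun p hp => hmaps p hp, fun p hp p' hp' h => hinj p hp p' hp' h, ?_⟩, himg⟩
  -- surjectivity onto Q
  have himgP : P.image π = Q := by
    apply Finset.eq_of_subset_of_card_le
    · intro y hy
      obtain ⟨p, hp, rfl⟩ := Finset.mem_image.mp hy
      exact hmaps p hp
    · rw [Finset.card_image_of_injOn (fun x hx y hy => hinj x hx y hy), hP, hQ]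
  intro q hq
  have : q ∈ P.image π := himgP ▸ hq
  obtain ⟨p, hp, rfl⟩ := Finset.mem_image.mp this
  exact ⟨p, hp, rfl⟩
end

section
/- Let Div be the group of finitely supported ℤ-valued functions on a set V, with deg(D) = ∑ D(v). Suppose rk : Div → ℤ satisfies: (i) Riemann–Roch: rk(D) − rk(K − D) = deg(D) − g + 1 for a fixed K ∈ Div and integer g ≥ 0; (ii) superadditivity on nonnegative-rank divisors: if rk(D) ≥ 0 and rk(E) ≥ 0 then rk(D + E) ≥ rk(D) + rk(E); (iii) rk(0) = 0. Then for any D with rk(D) ≥ 0 and rk(K − D) ≥ 0, one has 2·rk(D) ≤ deg(D). -/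
theorem stmt_7 {V : Type*} (rk : (V →₀ ℤ) → ℤ) (K : V →₀ ℤ) (g : ℤ) (hg : 0 ≤ g)
    (hRR : ∀ D : V →₀ ℤ, rk D - rk (K - D) = (D.sum fun _ n => n) - g + 1)
    (hsuper : ∀ D E : V →₀ ℤ, 0 ≤ rk D → 0 ≤ rk E → rk D + rk E ≤ rk (D + E))
    (hzero : rk 0 = 0) :
    ∀ D : V →₀ ℤ, 0 ≤ rk D → 0 ≤ rk (K - D) →
      2 * rk D ≤ D.sum fun _ n => n := by
  intro D hD hKD
  have h0 := hRR 0
  simp [hzero, Finsupp.sum_zero_index] at h0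
  have hK : rk K = g - 1 := by linarith
  have h1 := hsuper D (K - D) hD hKD
  have h2 : D + (K - D) = K := by abel
  rw [h2, hK] at h1
  have h3 := hRR D
  linarith
end

section
/- Let P, Q be finite sets with |P| = |Q| = n ≥ 2 and 1 ≤ r ≤ n − 1. Suppose π : P → Q is a map and φ is the induced map on r-element subsets, φ(A) = π(A), and φ is a bijection from r-subsets of P to r-subsets of Q. Then π is a bijection and |φ(A₁) ∩ ⋯ ∩ φ(A_k)| = |A₁ ∩ ⋯ ∩ A_k| for every nonempty finite family of r-subsets A_i of P. -/
theorem stmt_12 {α β : Type*} [DecidableEq α] [DecidableEq β]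
    (P : Finset α) (Q : Finset β) (n r : ℕ)
    (hP : P.card = n) (hQ : Q.card = n) (hn : 2 ≤ n) (hr1 : 1 ≤ r) (hrn : r ≤ n - 1)
    (π : α → β) (hmaps : ∀ p ∈ P, π p ∈ Q)
    (hbij : Set.BijOn (fun A : Finset α => A.image π)
      {A : Finset α | A ⊆ P ∧ A.card = r} {B : Finset β | B ⊆ Q ∧ B.card = r}) :
    Set.BijOn π ↑P ↑Q ∧
      ∀ (ι : Type) [Fintype ι] [Nonempty ι] (A : ι → Finset α),
        (∀ i, A i ⊆ P ∧ (A i).card = r) →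
        (Finset.univ.inf' Finset.univ_nonempty fun i => (A i).image π).card =
          (Finset.univ.inf' Finset.univ_nonempty fun i => A i).card := by
  have hinj : Set.InjOn π ↑P := by
    intro p₁ hp₁ p₂ hp₂ hππ
    by_contra hne
    have hp₁e : p₁ ∈ P.erase p₂ := Finset.mem_erase.2 ⟨hne, hp₁⟩
    have hcard : r ≤ (P.erase p₂).card := by
      rw [Finset.card_erase_of_mem hp₂, hP]; exact hrn
    obtain ⟨A, hA1, hA2, hA3⟩ := Finset.exists_subsuperset_card_eq
      (Finset.singleton_subset_iff.2 hp₁e) (by simpa using hr1) hcard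
    have hp₁A : p₁ ∈ A := hA1 (Finset.mem_singleton_self p₁)
    have hp₂A : p₂ ∉ A := fun h => (Finset.mem_erase.1 (hA2 h)).1 rfl
    have hAP : A ⊆ P := hA2.trans (Finset.erase_subset _ _)
    set A' : Finset α := insert p₂ (A.erase p₁) with hA'
    have hp₂A' : p₂ ∈ A' := Finset.mem_insert_self _ _
    have hA'P : A' ⊆ P := by
      intro x hx
      rcases Finset.mem_insert.1 hx with h | h
      · exact h ▸ hp₂
      · exact hAP (Finset.mem_of_mem_erase h)
    have hA'card : A'.card = r := by
      rw [hA', Finset.card_insert_of_notMem (fun h => hp₂A (Finset.mem_of_mem_erase h)),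
        Finset.card_erase_of_mem hp₁A, hA3]
      omega
    have himg : A'.image π = A.image π := by
      have : A = insert p₁ (A.erase p₁) := (Finset.insert_erase hp₁A).symm
      rw [hA', Finset.image_insert, ← hππ]
      conv_rhs => rw [this, Finset.image_insert]
    have := hbij.injOn (show A' ∈ {A : Finset α | A ⊆ P ∧ A.card = r} from ⟨hA'P, hA'card⟩)
      (show A ∈ {A : Finset α | A ⊆ P ∧ A.card = r} from ⟨hAP, hA3⟩) himg
    exact hp₂A (this ▸ hp₂A')
  have himgP : P.image π = Q := by
    apply Finset.eq_of_subset_of_card_le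
    · intro b hb
      obtain ⟨a, ha, rfl⟩ := Finset.mem_image.1 hb
      exact hmaps a ha
    · rw [Finset.card_image_of_injOn hinj, hP, hQ]
  have hbijP : Set.BijOn π ↑P ↑Q := by
    refine ⟨fun p hp => hmaps p hp, hinj, ?_⟩
    intro b hb
    have : b ∈ P.image π := himgP ▸ hb
    obtain ⟨a, ha, rfl⟩ := Finset.mem_image.1 this
    exact ⟨a, ha, rfl⟩
  refine ⟨hbijP, ?_⟩
  intro ι _ _ A hA
  have hmem : ∀ (s : Finset α) (x : α),
      x ∈ Finset.univ.inf' Finset.univ_nonempty A ↔ ∀ i, x ∈ A i := by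
    intro s x
    simp [Finset.mem_inf']
  have hsub : Finset.univ.inf' Finset.univ_nonempty A ⊆ P := by
    intro x hx
    exact (hA (Classical.arbitrary ι)).1 (((hmem ∅ x).1 hx) _)
  have key : (Finset.univ.inf' Finset.univ_nonempty fun i => (A i).image π)
      = (Finset.univ.inf' Finset.univ_nonempty A).image π := by
    ext b
    simp only [Finset.mem_inf', Finset.mem_univ, forall_true_left, Finset.mem_image,
      forall_const, true_implies]
    constructor
    · intro h
      obtain ⟨a, ha, rfl⟩ := h (Classical.arbitrary ι)
      refine ⟨a, fun i => ?_, rfl⟩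
      obtain ⟨a', ha', haa'⟩ := h i
      have : a' = a := hinj ((hA i).1 ha') ((hA (Classical.arbitrary ι)).1 ha) haa'
      exact this ▸ ha'
    · rintro ⟨a, ha, rfl⟩ i
      exact ⟨a, ha i, rfl⟩
  rw [key, Finset.card_image_of_injOn (hinj.mono (by exact_mod_cast hsub))]
end
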